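/- For all κ₁ ≥ κ₀ > 0 there exists C > 1, depending only on κ₀ and κ₁, such that the following holds. Let γ : ℝ → ℝ² be C² with γ(s + 1) = γ(s) and ‖γ'(s)‖ = 1 for all s, with curvature κ(s) := det(γ'(s), γ''(s)) satisfying κ₀ ≤ κ(s) ≤ κ₁ for all s and ∫₀¹ κ(s) ds = 2π. Then for all s₁, s₂ ∈ ℝ, C⁻¹·dist_𝕋(s₁, s₂) ≤ ‖γ(s₂) - γ(s₁)‖ ≤ dist_𝕋(s₁, s₂). -/

import Mathlib

open Real

/-- Distance on the circle `ℝ/ℤ`: `dist_𝕋(s₁, s₂) = min_{n ∈ ℤ} |s₂ - s₁ - n|`. -/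
noncomputable def distT (s₁ s₂ : ℝ) : ℝ := ⨅ n : ℤ, |s₂ - s₁ - (n : ℝ)|

/-- The (signed) curvature `κ(s) = det(γ'(s), γ''(s))` of a unit-speed plane curve. -/
noncomputable def curv (γ : ℝ → EuclideanSpace ℝ (Fin 2)) (s : ℝ) : ℝ :=
  deriv γ s 0 * deriv (deriv γ) s 1 - deriv γ s 1 * deriv (deriv γ) s 0

/-! ### Auxiliary material -/

/-- Identification of `EuclideanSpace ℝ (Fin 2)` with `ℂ`. -/
noncomputable def c2 (x : EuclideanSpace ℝ (Fin 2)) : ℂ := (x 0 : ℂ) + (x 1 : ℂ) * Complex.I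

lemma abs_c2 (x : EuclideanSpace ℝ (Fin 2)) : ‖c2 x‖ = ‖x‖ := by
  rw [EuclideanSpace.norm_eq, c2, Complex.norm_def, Complex.normSq_add_mul_I]
  simp [Fin.sum_univ_two, Real.norm_eq_abs, sq_abs]

lemma c2_sub (x y : EuclideanSpace ℝ (Fin 2)) : c2 (x - y) = c2 x - c2 y := by
  simp only [c2, PiLp.sub_apply]; push_cast; ring

lemma comp_proj_hasDerivAt {f : ℝ → EuclideanSpace ℝ (Fin 2)} {f' : EuclideanSpace ℝ (Fin 2)}
    {t : ℝ} (h : HasDerivAt f f' t) (i : Fin 2) :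
    HasDerivAt (fun u => f u i) (f' i) t := by
  have := (EuclideanSpace.proj i).hasFDerivAt.comp_hasDerivAt t h
  simpa [Function.comp_def] using this

lemma hasDerivAt_c2 {f : ℝ → EuclideanSpace ℝ (Fin 2)} {f' : EuclideanSpace ℝ (Fin 2)}
    {t : ℝ} (h : HasDerivAt f f' t) :
    HasDerivAt (fun u => c2 (f u)) (c2 f') t := by
  simpa [c2] using ((comp_proj_hasDerivAt h 0).ofReal_comp.fun_add
    ((comp_proj_hasDerivAt h 1).ofReal_comp.mul_const Complex.I))

lemma curv_continuous (γ : ℝ → EuclideanSpace ℝ (Fin 2)) (hγ : ContDiff ℝ 2 γ) :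
    Continuous (curv γ) := by
  have hd1 : ContDiff ℝ 1 (deriv γ) := by
    have h2 : ContDiff ℝ ((1:ℕ)+1) γ := by exact_mod_cast hγ
    exact (contDiff_succ_iff_deriv.mp h2).2.2
  have hc1 : Continuous (deriv γ) := hd1.continuous
  have hc2 : Continuous (deriv (deriv γ)) := (contDiff_one_iff_deriv.mp hd1).2
  have e : ∀ i : Fin 2, Continuous fun s => deriv γ s i := fun i => by
    simpa [Function.comp_def] using (EuclideanSpace.proj i).continuous.comp hc1
  have e' : ∀ i : Fin 2, Continuous fun s => deriv (deriv γ) s i := fun i => by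
    simpa [Function.comp_def] using (EuclideanSpace.proj i).continuous.comp hc2
  exact ((e 0).mul (e' 1)).sub ((e 1).mul (e' 0))

/-- Existence of a `C¹` angle function `θ` with `θ' = κ` and `γ' = e^{iθ}`. -/
lemma exists_angle (γ : ℝ → EuclideanSpace ℝ (Fin 2)) (hγ : ContDiff ℝ 2 γ)
    (hnorm : ∀ s, ‖deriv γ s‖ = 1) :
    ∃ θ : ℝ → ℝ, (∀ s, HasDerivAt θ (curv γ s) s) ∧
      (∀ s, c2 (deriv γ s) = Complex.exp ((θ s : ℂ) * Complex.I)) := by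
  have hγd : Differentiable ℝ γ := hγ.differentiable (by norm_num)
  have hd1 : ContDiff ℝ 1 (deriv γ) := by
    have h2 : ContDiff ℝ ((1:ℕ)+1) γ := by exact_mod_cast hγ
    exact (contDiff_succ_iff_deriv.mp h2).2.2
  have hdd : ∀ s, HasDerivAt (deriv γ) (deriv (deriv γ) s) s :=
    fun s => ((hd1.differentiable one_ne_zero) s).hasDerivAt
  have hkc : Continuous (curv γ) := curv_continuous γ hγ
  have hsq : ∀ s, (deriv γ s 0)^2 + (deriv γ s 1)^2 = 1 := by
    intro s
    have h := hnorm s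
    rw [EuclideanSpace.norm_eq] at h
    have := congrArg (· ^ 2) h
    simp only [one_pow] at this
    rw [Real.sq_sqrt (by positivity)] at this
    simpa [Fin.sum_univ_two, Real.norm_eq_abs, sq_abs] using this
  have horth : ∀ s, deriv γ s 0 * deriv (deriv γ) s 0 + deriv γ s 1 * deriv (deriv γ) s 1 = 0 := by
    intro s
    have h0 := comp_proj_hasDerivAt (hdd s) 0
    have h1 := comp_proj_hasDerivAt (hdd s) 1
    have hf : HasDerivAt (fun u => (deriv γ u 0)^2 + (deriv γ u 1)^2)
        (2 * deriv γ s 0 * deriv (deriv γ) s 0 + 2 * deriv γ s 1 * deriv (deriv γ) s 1) s := by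
      have := ((h0.fun_pow 2).fun_add (h1.fun_pow 2))
      exact this.congr_deriv (by ring)
    have hconst : (fun u => (deriv γ u 0)^2 + (deriv γ u 1)^2) = fun _ => (1:ℝ) := by
      funext u; exact hsq u
    rw [hconst] at hf
    have := hf.unique (hasDerivAt_const s 1)
    linarith
  have hODE : ∀ s, c2 (deriv (deriv γ) s) = Complex.I * (curv γ s) * c2 (deriv γ s) := by
    intro s
    have h1 := hsq s
    have h2 := horth s
    apply Complex.ext
    · simp only [c2, curv, Complex.add_re, Complex.add_im, Complex.mul_re, Complex.mul_im,
        Complex.I_re, Complex.I_im, Complex.ofReal_re, Complex.ofReal_im]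
      linear_combination (-(deriv (deriv γ) s 0)) * h1 + deriv γ s 0 * h2
    · simp only [c2, curv, Complex.add_re, Complex.add_im, Complex.mul_re, Complex.mul_im,
        Complex.I_re, Complex.I_im, Complex.ofReal_re, Complex.ofReal_im]
      linear_combination (-(deriv (deriv γ) s 1)) * h1 + deriv γ s 1 * h2
  set θ₁ : ℝ → ℝ := fun s => ∫ t in (0:ℝ)..s, curv γ t with hθ₁def
  have hθ₁ : ∀ s, HasDerivAt θ₁ (curv γ s) s :=
    fun s => (hkc.integral_hasStrictDerivAt 0 s).hasDerivAt
  set v : ℝ → ℂ := fun s => c2 (deriv γ s) with hvdef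
  have hvd : ∀ s, HasDerivAt v (c2 (deriv (deriv γ) s)) s := fun s => hasDerivAt_c2 (hdd s)
  have hexp : ∀ s, HasDerivAt (fun u => Complex.exp (-(θ₁ u : ℂ) * Complex.I))
      (Complex.exp (-(θ₁ s : ℂ) * Complex.I) * (-(curv γ s : ℂ) * Complex.I)) s := by
    intro s
    have hin : HasDerivAt (fun u => -(θ₁ u : ℂ) * Complex.I) (-(curv γ s : ℂ) * Complex.I) s := by
      have : HasDerivAt (fun u => ((-θ₁ u : ℝ) : ℂ)) ((-curv γ s : ℝ) : ℂ) s :=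
        ((hθ₁ s).neg).ofReal_comp
      simpa using this.mul_const Complex.I
    exact hin.cexp
  have hg : ∀ s, HasDerivAt (fun u => v u * Complex.exp (-(θ₁ u : ℂ) * Complex.I)) 0 s := by
    intro s
    have := (hvd s).fun_mul (hexp s)
    rw [hODE s] at this
    exact this.congr_deriv (by ring)
  have hgconst : ∀ s, v s * Complex.exp (-(θ₁ s : ℂ) * Complex.I) = v 0 := by
    intro s
    have hdiff : Differentiable ℝ (fun u => v u * Complex.exp (-(θ₁ u : ℂ) * Complex.I)) :=
      fun u => (hg u).differentiableAt
    have := is_const_of_deriv_eq_zero hdiff (fun u => (hg u).deriv) s 0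
    have hθ₁0 : θ₁ 0 = 0 := intervalIntegral.integral_same
    simpa [hθ₁0] using this
  have habs : ‖v 0‖ = 1 := by rw [hvdef]; rw [abs_c2]; exact hnorm 0
  obtain ⟨φ₀, hφ₀⟩ := (Complex.norm_eq_one_iff _).mp habs
  refine ⟨fun s => φ₀ + θ₁ s, fun s => by simpa using (hθ₁ s).const_add φ₀, fun s => ?_⟩
  have h1 : v s = v 0 * Complex.exp ((θ₁ s : ℂ) * Complex.I) := by
    have := hgconst s
    field_simp [← Complex.exp_add] at this ⊢
    rw [← this, mul_assoc, ← Complex.exp_add]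
    simp
  rw [show c2 (deriv γ s) = v s from rfl, h1, ← hφ₀, ← Complex.exp_add]
  push_cast
  ring_nf

/-- The key chord estimate: on an arc whose tangent turns by `Φ ≤ π`, the chord is
at least `(2/κ₁) sin(Φ/2)`. -/
lemma chord_lower {κ₁ : ℝ} (hκ₁ : 0 < κ₁) (γ : ℝ → EuclideanSpace ℝ (Fin 2)) (θ : ℝ → ℝ)
    (hγd : Differentiable ℝ γ)
    (hkc : Continuous (curv γ))
    (hθ : ∀ s, HasDerivAt θ (curv γ s) s)
    (hv : ∀ s, c2 (deriv γ s) = Complex.exp ((θ s : ℂ) * Complex.I))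
    (hk0 : ∀ s, 0 ≤ curv γ s) (hk1 : ∀ s, curv γ s ≤ κ₁)
    {a b : ℝ} (hab : a ≤ b) (hΦ : θ b - θ a ≤ π) :
    2 / κ₁ * Real.sin ((θ b - θ a) / 2) ≤ ‖γ b - γ a‖ := by
  set m : ℝ := (θ a + θ b) / 2 with hm
  have θcont : Continuous θ := by
    rw [continuous_iff_continuousAt]; exact fun s => (hθ s).continuousAt
  have θmono : Monotone θ := by
    apply monotone_of_deriv_nonneg (fun s => (hθ s).differentiableAt)
    intro s; rw [(hθ s).deriv]; exact hk0 s
  have hΦ0 : 0 ≤ θ b - θ a := sub_nonneg.2 (θmono hab)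
  have hcos : ∀ t ∈ Set.Icc a b, 0 ≤ Real.cos (θ t - m) := by
    intro t ht
    apply Real.cos_nonneg_of_mem_Icc
    constructor
    · have := θmono ht.1
      simp only [hm]; linarith
    · have := θmono ht.2
      simp only [hm]; linarith
  have hg : ∀ t, HasDerivAt (fun u => Real.sin (θ u - m)) (Real.cos (θ t - m) * curv γ t) t := by
    intro t
    simpa [Function.comp_def] using (Real.hasDerivAt_sin (θ t - m)).comp t ((hθ t).sub_const m)
  have hh : ∀ t, HasDerivAt (fun u => (Complex.exp (-(m:ℂ) * Complex.I) * c2 (γ u)).re)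
      (Real.cos (θ t - m)) t := by
    intro t
    have hF : HasDerivAt (fun u => Complex.exp (-(m:ℂ) * Complex.I) * c2 (γ u))
        (Complex.exp (-(m:ℂ) * Complex.I) * c2 (deriv γ t)) t :=
      (hasDerivAt_c2 (hγd t).hasDerivAt).const_mul _
    have hval : (Complex.exp (-(m:ℂ) * Complex.I) * c2 (deriv γ t)).re
        = Real.cos (θ t - m) := by
      rw [hv t, ← Complex.exp_add]
      have : -(m:ℂ) * Complex.I + (θ t : ℂ) * Complex.I = ((θ t - m : ℝ) : ℂ) * Complex.I := by
        push_cast; ring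
      rw [this, Complex.exp_ofReal_mul_I_re]
    have := Complex.reCLM.hasFDerivAt.comp_hasDerivAt t hF
    simp only [Function.comp_def, Complex.reCLM_apply] at this
    rwa [hval] at this
  have cont1 : Continuous fun t => Real.cos (θ t - m) :=
    Real.continuous_cos.comp (θcont.sub continuous_const)
  have cont2 : Continuous fun t => Real.cos (θ t - m) * curv γ t := cont1.mul hkc
  have hgint : ∫ t in a..b, Real.cos (θ t - m) * curv γ t
      = Real.sin (θ b - m) - Real.sin (θ a - m) :=
    intervalIntegral.integral_eq_sub_of_hasDerivAt (fun t _ => hg t)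
      (cont2.intervalIntegrable a b)
  have hhint : ∫ t in a..b, Real.cos (θ t - m)
      = (Complex.exp (-(m:ℂ) * Complex.I) * c2 (γ b)).re
        - (Complex.exp (-(m:ℂ) * Complex.I) * c2 (γ a)).re :=
    intervalIntegral.integral_eq_sub_of_hasDerivAt (fun t _ => hh t)
      (cont1.intervalIntegrable a b)
  have hmono : ∫ t in a..b, Real.cos (θ t - m) * curv γ t
      ≤ ∫ t in a..b, κ₁ * Real.cos (θ t - m) := by
    apply intervalIntegral.integral_mono_on hab (cont2.intervalIntegrable a b)
      ((continuous_const.mul cont1).intervalIntegrable a b)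
    intro t ht
    rw [mul_comm]
    exact mul_le_mul_of_nonneg_right (hk1 t) (hcos t ht)
  have hre_le : (Complex.exp (-(m:ℂ) * Complex.I) * c2 (γ b)).re
        - (Complex.exp (-(m:ℂ) * Complex.I) * c2 (γ a)).re ≤ ‖γ b - γ a‖ := by
    have : (Complex.exp (-(m:ℂ) * Complex.I) * c2 (γ b)).re
        - (Complex.exp (-(m:ℂ) * Complex.I) * c2 (γ a)).re
        = (Complex.exp (-(m:ℂ) * Complex.I) * (c2 (γ b - γ a))).re := by
      rw [c2_sub]; rw [mul_sub, Complex.sub_re]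
    rw [this]
    calc (Complex.exp (-(m:ℂ) * Complex.I) * (c2 (γ b - γ a))).re
        ≤ ‖Complex.exp (-(m:ℂ) * Complex.I) * (c2 (γ b - γ a))‖ :=
          Complex.re_le_norm _
      _ = ‖γ b - γ a‖ := by
          rw [norm_mul, abs_c2]
          have : -(m:ℂ) * Complex.I = ((-m : ℝ) : ℂ) * Complex.I := by push_cast; ring
          rw [this, Complex.norm_exp_ofReal_mul_I, one_mul]
  have hsin : Real.sin (θ b - m) - Real.sin (θ a - m) = 2 * Real.sin ((θ b - θ a) / 2) := by
    have h1 : θ b - m = (θ b - θ a) / 2 := by rw [hm]; ring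
    have h2 : θ a - m = -((θ b - θ a) / 2) := by rw [hm]; ring
    rw [h1, h2, Real.sin_neg]; ring
  have key : 2 * Real.sin ((θ b - θ a) / 2) ≤ κ₁ * ‖γ b - γ a‖ := by
    calc 2 * Real.sin ((θ b - θ a) / 2) = ∫ t in a..b, Real.cos (θ t - m) * curv γ t := by
          rw [hgint, hsin]
      _ ≤ ∫ t in a..b, κ₁ * Real.cos (θ t - m) := hmono
      _ = κ₁ * ∫ t in a..b, Real.cos (θ t - m) := by
          rw [intervalIntegral.integral_const_mul]
      _ ≤ κ₁ * ‖γ b - γ a‖ := by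
          rw [hhint]
          exact mul_le_mul_of_nonneg_left hre_le hκ₁.le
  rw [div_mul_eq_mul_div, div_le_iff₀ hκ₁]
  linarith [key]

/-- Combining the chord bound with Jordan's inequality. -/
lemma chain {κ₀ κ₁ d Ψ chord : ℝ} (h0 : 0 < κ₀) (hκ₁ : 0 < κ₁) (hd : 0 ≤ d)
    (hΨ0 : 0 ≤ Ψ) (hΨπ : Ψ ≤ π) (hΨd : κ₀ * d ≤ Ψ)
    (hch : 2 / κ₁ * Real.sin (Ψ / 2) ≤ chord) :
    2 * κ₀ / (π * κ₁) * d ≤ chord := by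
  have hπ : (0:ℝ) < π := Real.pi_pos
  have hsin : 2 / π * (Ψ / 2) ≤ Real.sin (Ψ / 2) :=
    Real.mul_le_sin (by linarith) (by linarith)
  have h1 : 2 * κ₀ / (π * κ₁) * d ≤ 2 / (π * κ₁) * Ψ := by
    have := mul_le_mul_of_nonneg_left hΨd (le_of_lt (by positivity : (0:ℝ) < 2 / (π * κ₁)))
    calc 2 * κ₀ / (π * κ₁) * d = 2 / (π * κ₁) * (κ₀ * d) := by ring
      _ ≤ 2 / (π * κ₁) * Ψ := this
  have h2 : 2 / (π * κ₁) * Ψ ≤ 2 / κ₁ * Real.sin (Ψ / 2) := by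
    calc 2 / (π * κ₁) * Ψ = 2 / κ₁ * (2 / π * (Ψ / 2)) := by field_simp
      _ ≤ 2 / κ₁ * Real.sin (Ψ / 2) :=
        mul_le_mul_of_nonneg_left hsin (by positivity)
  linarith

/-- Chord–arc estimate: for a unit-speed `1`-periodic `C²` plane curve with curvature
pinched in `[κ₀, κ₁]` and total curvature `2π`, the chord length `‖γ(s₂) - γ(s₁)‖` is
comparable to the circle distance `dist_𝕋(s₁, s₂)`, with constant depending only on
`κ₀, κ₁`. -/
theorem stmt11 (κ₀ κ₁ : ℝ) (h0 : 0 < κ₀) (h01 : κ₀ ≤ κ₁) :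
    ∃ C : ℝ, 1 < C ∧
      ∀ γ : ℝ → EuclideanSpace ℝ (Fin 2),
        ContDiff ℝ 2 γ → (∀ s, γ (s + 1) = γ s) → (∀ s, ‖deriv γ s‖ = 1) →
        (∀ s, κ₀ ≤ curv γ s) → (∀ s, curv γ s ≤ κ₁) →
        (∫ s in (0:ℝ)..1, curv γ s) = 2 * π →
        ∀ s₁ s₂ : ℝ,
          C⁻¹ * distT s₁ s₂ ≤ ‖γ s₂ - γ s₁‖ ∧ ‖γ s₂ - γ s₁‖ ≤ distT s₁ s₂ := by
  have hκ₁ : 0 < κ₁ := lt_of_lt_of_le h0 h01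
  have hπ : (0:ℝ) < π := Real.pi_pos
  refine ⟨π * κ₁ / (2 * κ₀) + 1, ?_, ?_⟩
  · have : 0 < π * κ₁ / (2 * κ₀) := by positivity
    linarith
  intro γ hγ hper hnorm hκ0 hκ1 htot s₁ s₂
  set C : ℝ := π * κ₁ / (2 * κ₀) + 1 with hC
  have hγd : Differentiable ℝ γ := hγ.differentiable (by norm_num)
  have hbdd : BddBelow (Set.range fun n : ℤ => |s₂ - s₁ - (n : ℝ)|) :=
    ⟨0, by rintro x ⟨n, rfl⟩; exact abs_nonneg _⟩
  have hperZ : ∀ (x : ℝ) (n : ℤ), γ (x - n) = γ x := by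
    intro x n
    have : Function.Periodic γ 1 := hper
    simpa using this.sub_int_mul_eq (x := x) n
  -- upper bound
  have hupper : ‖γ s₂ - γ s₁‖ ≤ distT s₁ s₂ := by
    apply le_ciInf
    intro n
    have hlip : LipschitzWith 1 γ := by
      apply lipschitzWith_of_nnnorm_deriv_le hγd
      intro x
      simp only [← norm_toNNReal, hnorm x]
      simp
    have := hlip.dist_le_mul (s₂ - n) s₁
    rw [dist_eq_norm, dist_eq_norm] at this
    rw [← hperZ s₂ n]
    calc ‖γ (s₂ - n) - γ s₁‖ ≤ 1 * ‖(s₂ - (n:ℝ)) - s₁‖ := this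
      _ = |s₂ - s₁ - n| := by rw [one_mul, Real.norm_eq_abs]; congr 1; ring
  refine ⟨?_, hupper⟩
  -- lower bound
  have hkc : Continuous (curv γ) := curv_continuous γ hγ
  obtain ⟨θ, hθ, hv⟩ := exists_angle γ hγ hnorm
  have hk0 : ∀ s, 0 ≤ curv γ s := fun s => le_trans h0.le (hκ0 s)
  have hperd : ∀ x : ℝ, deriv γ (x + 1) = deriv γ x := by
    intro x
    rw [← deriv_comp_add_const]
    simp only [hper]
  have hperdd : ∀ x : ℝ, deriv (deriv γ) (x + 1) = deriv (deriv γ) x := by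
    intro x
    rw [← deriv_comp_add_const]
    congr 1
    funext y
    exact hperd y
  have hkper : ∀ x : ℝ, curv γ (x + 1) = curv γ x := by
    intro x; unfold curv; rw [hperd, hperdd]
  have hθint : ∀ a b : ℝ, θ b - θ a = ∫ t in a..b, curv γ t := fun a b =>
    (intervalIntegral.integral_eq_sub_of_hasDerivAt (fun t _ => hθ t)
      (hkc.intervalIntegrable a b)).symm
  have h2π : ∀ a : ℝ, θ (a + 1) = θ a + 2 * π := by
    intro a
    have h1 : θ (a+1) - θ a = ∫ t in a..(a+1), curv γ t := hθint a (a+1)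
    have h2 : (∫ t in a..(a+1), curv γ t) = ∫ t in (0:ℝ)..(0+1), curv γ t :=
      Function.Periodic.intervalIntegral_add_eq (hkper : Function.Periodic (curv γ) 1) a 0
    rw [zero_add] at h2
    rw [h2, htot] at h1
    linarith
  have hθlow : ∀ a b : ℝ, a ≤ b → κ₀ * (b - a) ≤ θ b - θ a := by
    intro a b hab
    have hmono : Monotone (fun u => θ u - κ₀ * u) := by
      apply monotone_of_deriv_nonneg
      · intro u
        exact ((hθ u).sub ((hasDerivAt_id u).const_mul κ₀)).differentiableAt
      · intro u
        have hder : HasDerivAt (fun u => θ u - κ₀ * u) (curv γ u - κ₀) u := by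
          simpa using (hθ u).fun_sub ((hasDerivAt_id u).const_mul κ₀)
        rw [hder.deriv]
        have := hκ0 u; linarith
    have := hmono hab
    simp only at this
    linarith
  have main : ∀ a b : ℝ, a ≤ b → b - a ≤ 1/2 →
      2 * κ₀ / (π * κ₁) * (b - a) ≤ ‖γ b - γ a‖ := by
    intro a b hab hhalf
    have hd : 0 ≤ b - a := by linarith
    have hΦκ : κ₀ * (b - a) ≤ θ b - θ a := hθlow a b hab
    have hb1 : b ≤ a + 1 := by linarith
    have hΨκ : κ₀ * (a + 1 - b) ≤ θ (a+1) - θ b := hθlow b (a+1) hb1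
    rcases le_or_gt (θ b - θ a) π with hc | hc
    · refine chain h0 hκ₁ hd ?_ hc hΦκ
        (chord_lower hκ₁ γ θ hγd hkc hθ hv hk0 hκ1 hab hc)
      have := mul_nonneg h0.le hd
      linarith
    · have hΨ : θ (a+1) - θ b = 2 * π - (θ b - θ a) := by rw [h2π a]; ring
      have hΨπ : θ (a+1) - θ b ≤ π := by rw [hΨ]; linarith
      have hch := chord_lower hκ₁ γ θ hγd hkc hθ hv hk0 hκ1 hb1 hΨπ
      rw [show γ (a+1) = γ a from hper a] at hch
      rw [show ‖γ a - γ b‖ = ‖γ b - γ a‖ from norm_sub_rev _ _] at hch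
      refine chain h0 hκ₁ hd ?_ hΨπ ?_ hch
      · have : (0:ℝ) ≤ κ₀ * (a + 1 - b) := mul_nonneg h0.le (by linarith)
        linarith
      · calc κ₀ * (b - a) ≤ κ₀ * (a + 1 - b) := by
              apply mul_le_mul_of_nonneg_left _ h0.le; linarith
          _ ≤ θ (a+1) - θ b := hΨκ
  set n : ℤ := round (s₂ - s₁) with hn
  set r : ℝ := s₂ - s₁ - n with hr
  have hrhalf : |r| ≤ 1/2 := by rw [hr, hn]; exact abs_sub_round (s₂ - s₁)
  have hγs₂ : γ s₂ = γ (s₁ + r) := by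
    rw [show s₁ + r = s₂ - (n:ℝ) from by rw [hr]; ring]
    exact (hperZ s₂ n).symm
  have hdler : distT s₁ s₂ ≤ |r| := ciInf_le hbdd n
  have hmain : 2 * κ₀ / (π * κ₁) * |r| ≤ ‖γ s₂ - γ s₁‖ := by
    rcases le_or_gt 0 r with h | h
    · have h2 := main s₁ (s₁ + r) (by linarith) (by rw [abs_of_nonneg h] at hrhalf; linarith)
      rw [← hγs₂] at h2
      have harg : s₁ + r - s₁ = |r| := by rw [abs_of_nonneg h]; ring
      rwa [harg] at h2
    · have h2 := main (s₁ + r) s₁ (by linarith) (by rw [abs_of_neg h] at hrhalf; linarith)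
      have heq : ‖γ s₁ - γ (s₁ + r)‖ = ‖γ s₂ - γ s₁‖ := by rw [hγs₂, norm_sub_rev]
      rw [heq] at h2
      have harg : s₁ - (s₁ + r) = |r| := by rw [abs_of_neg h]; ring
      rwa [harg] at h2
  have hCpos : 0 < C := by rw [hC]; positivity
  have hCge : π * κ₁ / (2 * κ₀) ≤ C := by rw [hC]; linarith
  have hCinv : C⁻¹ ≤ 2 * κ₀ / (π * κ₁) := by
    have := inv_anti₀ (by positivity : (0:ℝ) < π * κ₁ / (2 * κ₀)) hCge
    rwa [show (π * κ₁ / (2 * κ₀))⁻¹ = 2 * κ₀ / (π * κ₁) from by rw [inv_div]] at this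
  calc C⁻¹ * distT s₁ s₂ ≤ C⁻¹ * |r| :=
        mul_le_mul_of_nonneg_left hdler (inv_nonneg.2 hCpos.le)
    _ ≤ 2 * κ₀ / (π * κ₁) * |r| := mul_le_mul_of_nonneg_right hCinv (abs_nonneg r)
    _ ≤ ‖γ s₂ - γ s₁‖ := hmain
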